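/- arXiv:2012.07956 — 3 statements merged into one kernel-verified Lean document; each statement's English description precedes it below -/
import Mathlib

section
/- Let A be an N×N positive definite Hermitian matrix with eigenvalues λ_1, ..., λ_N, and let I_N be the identity matrix. Then P_{I_N}(A) = max over k ∈ {1,...,N} of the sum of λ_j^{-1} over j ≠ k. -/
open Matrix ComplexOrder

noncomputable def restTrace {N k : ℕ} (A B : Matrix (Fin N) (Fin N) ℂ)
    (P : Matrix (Fin N) (Fin k) ℂ) : ℝ :=
  ((Pᴴ * A * P)⁻¹ * (Pᴴ * B * P)).trace.re

/-- `jP A B = P_B(A)`: the supremum over all hyperplanes `V ⊂ ℂ^N` of `tr_{A|_V}(B|_V)`. -/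
noncomputable def jP {N : ℕ} (A B : Matrix (Fin N) (Fin N) ℂ) : ℝ :=
  sSup {x : ℝ | ∃ P : Matrix (Fin N) (Fin (N - 1)) ℂ,
    Function.Injective P.mulVecLin ∧ x = restTrace A B P}

namespace JPAux

variable {N : ℕ}


lemma posDef_conj {m : ℕ} {A : Matrix (Fin N) (Fin N) ℂ} (hA : A.PosDef)
    (P : Matrix (Fin N) (Fin m) ℂ) (hP : Function.Injective P.mulVecLin) :
    (Pᴴ * A * P).PosDef := by
  refine posDef_iff_dotProduct_mulVec.mpr ⟨isHermitian_conjTranspose_mul_mul P hA.isHermitian, fun x hx => ?_⟩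
  have hPx : P *ᵥ x ≠ 0 := by
    intro h
    exact hx (hP (by simpa [mulVecLin_apply] using h))
  have h2 : star x ⬝ᵥ ((Pᴴ * A * P) *ᵥ x) = star (P *ᵥ x) ⬝ᵥ (A *ᵥ (P *ᵥ x)) := by
    rw [star_mulVec, ← dotProduct_mulVec, mulVec_mulVec, mulVec_mulVec, dotProduct_mulVec]
  rw [h2]
  exact hA.dotProduct_mulVec_pos hPx

lemma sandwich {V D D' : Matrix (Fin N) (Fin N) ℂ} (h1 : star V * V = 1)
    (h2 : V * star V = 1) (h3 : D * D' = 1) : (V * D * star V) * (V * D' * star V) = 1 := by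
  simp only [Matrix.mul_assoc]
  rw [← Matrix.mul_assoc (star V) V, h1, Matrix.one_mul, ← Matrix.mul_assoc D D', h3,
    Matrix.one_mul, h2]

section
variable {A : Matrix (Fin N) (Fin N) ℂ} (hA : A.PosDef)

local notation "U" => (hA.isHermitian.eigenvectorUnitary : Matrix (Fin N) (Fin N) ℂ)
local notation "μ" => hA.isHermitian.eigenvalues

lemma U_mul_star : U * star U = 1 :=
  (Matrix.mem_unitaryGroup_iff).mp (hA.isHermitian.eigenvectorUnitary).2

lemma star_mul_U : star U * U = 1 :=
  (Matrix.mem_unitaryGroup_iff').mp (hA.isHermitian.eigenvectorUnitary).2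

lemma inv_spectral :
    A⁻¹ = U * diagonal (fun j => ((μ j : ℂ))⁻¹) * star U := by
  have hd : diagonal (RCLike.ofReal ∘ μ) * diagonal (fun j => ((μ j : ℂ))⁻¹) = 1 := by
    rw [diagonal_mul_diagonal]
    ext i j
    rcases eq_or_ne i j with rfl | h
    · simp [mul_inv_cancel₀, Complex.ofReal_ne_zero.mpr (hA.eigenvalues_pos i).ne']
    · simp [diagonal_apply_ne _ h, one_apply_ne h]
  apply inv_eq_right_inv
  have h := hA.isHermitian.spectral_theorem
  rw [Unitary.conjStarAlgAut_apply] at h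
  rw [show A * (U * (diagonal fun j => ((μ j : ℂ))⁻¹) * star U)
      = (U * diagonal (RCLike.ofReal ∘ μ) * star U)
        * (U * (diagonal fun j => ((μ j : ℂ))⁻¹) * star U) from by rw [← h]]
  exact sandwich (star_mul_U hA) (U_mul_star hA) hd

lemma trace_inv : (A⁻¹).trace.re = ∑ j, (μ j)⁻¹ := by
  rw [inv_spectral hA, Matrix.trace_mul_cycle, star_mul_U hA,
    Matrix.one_mul, Matrix.trace_diagonal]
  simp

end

section
variable {A : Matrix (Fin N) (Fin N) ℂ} (hA : A.PosDef)
local notation "U" => (hA.isHermitian.eigenvectorUnitary : Matrix (Fin N) (Fin N) ℂ)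
local notation "μ" => hA.isHermitian.eigenvalues

lemma rayleigh (k₀ : Fin N) (hk : ∀ j, μ j ≤ μ k₀) (q : Fin N → ℂ) :
    (μ k₀)⁻¹ * (star q ⬝ᵥ q).re ≤ (star q ⬝ᵥ (A⁻¹ *ᵥ q)).re := by
  set w : Fin N → ℂ := star U *ᵥ q with hw
  have hsw : star w = star q ᵥ* U := by
    rw [hw, star_mulVec, Matrix.star_eq_conjTranspose, conjTranspose_conjTranspose]
  have h1 : star q ⬝ᵥ (A⁻¹ *ᵥ q)
      = star w ⬝ᵥ ((diagonal fun j => ((μ j : ℂ))⁻¹) *ᵥ w) := by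
    rw [inv_spectral hA, ← mulVec_mulVec, ← mulVec_mulVec, dotProduct_mulVec, ← hsw, hw]
  have h2 : star q ⬝ᵥ q = star w ⬝ᵥ w := by
    rw [hsw, hw, ← dotProduct_mulVec, mulVec_mulVec, U_mul_star hA, one_mulVec]
  have hre1 : (star w ⬝ᵥ ((diagonal fun j => ((μ j : ℂ))⁻¹) *ᵥ w)).re
      = ∑ j, (μ j)⁻¹ * Complex.normSq (w j) := by
    rw [dotProduct, Complex.re_sum]
    refine Finset.sum_congr rfl fun j _ => ?_
    rw [mulVec_diagonal, Pi.star_apply, Complex.star_def]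
    rw [show (starRingEnd ℂ) (w j) * (((μ j : ℂ))⁻¹ * w j)
        = ((((μ j)⁻¹ : ℝ)) : ℂ) * ((starRingEnd ℂ) (w j) * w j) from by
      push_cast; ring]
    rw [show (starRingEnd ℂ) (w j) * w j = (Complex.normSq (w j) : ℂ) from by
      rw [mul_comm, Complex.mul_conj]]
    rw [← Complex.ofReal_mul, Complex.ofReal_re]
  have hre2 : (star w ⬝ᵥ w).re = ∑ j, Complex.normSq (w j) := by
    rw [dotProduct, Complex.re_sum]
    refine Finset.sum_congr rfl fun j _ => ?_
    rw [Pi.star_apply, Complex.star_def, show (starRingEnd ℂ) (w j) * w j = (Complex.normSq (w j) : ℂ) from by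
      rw [mul_comm, Complex.mul_conj], Complex.ofReal_re]
  rw [h1, h2, hre1, hre2, Finset.mul_sum]
  refine Finset.sum_le_sum fun j _ => ?_
  refine mul_le_mul_of_nonneg_right ?_ (Complex.normSq_nonneg _)
  exact inv_anti₀ (hA.eigenvalues_pos j) (hk j)

end

lemma vecMulVec_mulVec (w x v : Fin N → ℂ) :
    vecMulVec w x *ᵥ v = (x ⬝ᵥ v) • w := by
  ext i
  simp [vecMulVec_apply, mulVec, dotProduct, Finset.mul_sum, mul_assoc, mul_comm, mul_left_comm]

lemma eq_one_of_mulVec {S : Matrix (Fin N) (Fin N) ℂ} (h : ∀ v, S *ᵥ v = v) : S = 1 := by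
  ext i j
  have := congrFun (h (Pi.single j 1)) i
  simp only [mulVec_single, mul_one, MulOpposite.op_one, one_smul, col_apply] at this
  rw [this]
  simp [Matrix.one_apply, Pi.single_apply, eq_comm]

lemma trace_mul_vecMulVec (B : Matrix (Fin N) (Fin N) ℂ) (q : Fin N → ℂ) :
    (B * vecMulVec q (star q)).trace = star q ⬝ᵥ (B *ᵥ q) := by
  rw [Matrix.trace, dotProduct]
  simp only [Matrix.diag_apply, mul_apply, vecMulVec_apply, mulVec, dotProduct, Finset.mul_sum]
  exact Finset.sum_congr rfl fun i _ => Finset.sum_congr rfl fun j _ => by ring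

lemma dot_star_self_re (q : Fin N → ℂ) :
    star q ⬝ᵥ q = ((∑ i, Complex.normSq (q i) : ℝ) : ℂ) := by
  rw [dotProduct]
  push_cast
  exact Finset.sum_congr rfl fun i _ => by
    rw [Pi.star_apply, Complex.star_def, mul_comm, Complex.mul_conj]

section
variable {A : Matrix (Fin N) (Fin N) ℂ} (hA : A.PosDef)
local notation "μ" => hA.isHermitian.eigenvalues

open scoped MatrixOrder in
lemma key_upper {m : ℕ} (hm : m + 1 = N) (k₀ : Fin N) (hk : ∀ j, μ j ≤ μ k₀)
    (P : Matrix (Fin N) (Fin m) ℂ) (hP : Function.Injective P.mulVecLin) :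
    ((Pᴴ * A * P)⁻¹ * (Pᴴ * P)).trace.re ≤ (∑ j, (μ j)⁻¹) - (μ k₀)⁻¹ := by
  classical
  set R := CFC.sqrt A with hRdef
  have hRR : R * R = A := CFC.sqrt_mul_sqrt_self A hA.posSemidef.nonneg
  have hRH : Rᴴ = R := (CFC.sqrt_nonneg A).posSemidef.isHermitian
  have hdetR : IsUnit R.det := by
    have hd : R.det * R.det = A.det := by rw [← det_mul, hRR]
    refine isUnit_iff_ne_zero.mpr fun h => ?_
    rw [h, mul_zero] at hd
    exact hA.det_pos.ne' hd.symm
  have hRinvR : R * A⁻¹ * R = 1 := by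
    rw [← hRR, Matrix.mul_inv_rev]
    simp only [Matrix.mul_assoc]
    rw [Matrix.nonsing_inv_mul R hdetR, Matrix.mul_one, Matrix.mul_nonsing_inv R hdetR]
  set M₀ := R * P with hM₀def
  have hM₀H : M₀ᴴ = Pᴴ * R := by rw [hM₀def, conjTranspose_mul, hRH]
  set C := Pᴴ * A * P with hCdef
  have hC : C = M₀ᴴ * M₀ := by
    rw [hM₀H, hM₀def, hCdef, ← hRR]
    simp only [Matrix.mul_assoc]
  have hCpd : C.PosDef := posDef_conj hA P hP
  have hdetC : IsUnit C.det := isUnit_iff_ne_zero.mpr hCpd.det_pos.ne'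
  have hPP : Pᴴ * P = M₀ᴴ * A⁻¹ * M₀ := by
    rw [hM₀H, hM₀def]
    simp only [Matrix.mul_assoc]
    rw [← Matrix.mul_assoc R A⁻¹ (R * P), ← Matrix.mul_assoc (R * A⁻¹) R P, hRinvR,
      Matrix.one_mul]
  have hM₀inj : Function.Injective M₀.mulVecLin := by
    rw [hM₀def, mulVecLin_mul]
    exact ((mulVec_injective_iff_isUnit.mpr (isUnit_iff_isUnit_det R |>.mpr hdetR)).comp hP :)
  -- find q ≠ 0 with M₀ᴴ *ᵥ q = 0
  obtain ⟨q, hq0, hq⟩ : ∃ q, q ≠ 0 ∧ M₀ᴴ *ᵥ q = 0 := by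
    by_contra h
    push_neg at h
    have hinj : Function.Injective (M₀ᴴ.mulVecLin) := by
      rw [← LinearMap.ker_eq_bot, LinearMap.ker_eq_bot']
      intro v hv
      by_contra hv0
      exact (h v hv0) (by simpa [mulVecLin_apply] using hv)
    have := LinearMap.finrank_le_finrank_of_injective hinj
    simp only [Module.finrank_fin_fun] at this
    omega
  have hτ : star q ⬝ᵥ q = ((∑ i, Complex.normSq (q i) : ℝ) : ℂ) := dot_star_self_re q
  set τ : ℝ := ∑ i, Complex.normSq (q i) with hτdef
  have hτpos : 0 < τ := by
    obtain ⟨i, hi⟩ : ∃ i, q i ≠ 0 := by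
      by_contra h; push_neg at h; exact hq0 (funext h)
    exact Finset.sum_pos' (fun j _ => Complex.normSq_nonneg _)
      ⟨i, Finset.mem_univ i, Complex.normSq_pos.mpr hi⟩
  set c : ℂ := ((τ : ℂ))⁻¹ with hcdef
  set Qm := M₀ * C⁻¹ * M₀ᴴ with hQm
  have hqM : star q ᵥ* M₀ = 0 := by
    have h := congrArg star hq
    rw [star_mulVec, conjTranspose_conjTranspose] at h
    simpa using h
  have hinf : LinearMap.range M₀.mulVecLin ⊓ Submodule.span ℂ {q} = ⊥ := by
    rw [Submodule.eq_bot_iff]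
    intro x hx
    obtain ⟨hx1, hx2⟩ := Submodule.mem_inf.mp hx
    obtain ⟨a, rfl⟩ := Submodule.mem_span_singleton.mp hx2
    rcases eq_or_ne a 0 with rfl | ha
    · simp
    · exfalso
      obtain ⟨u, hu⟩ := hx1
      apply hq0
      rw [mulVecLin_apply] at hu
      have hq' : q = M₀ *ᵥ (a⁻¹ • u) := by
        rw [mulVec_smul, hu, smul_smul, inv_mul_cancel₀ ha, one_smul]
      have hCu : C *ᵥ (a⁻¹ • u) = 0 := by
        rw [hC, ← mulVec_mulVec, ← hq', hq]
      have hu0 : a⁻¹ • u = 0 := by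
        have h2 := congrArg (fun v => C⁻¹ *ᵥ v) hCu
        simpa [mulVec_mulVec, Matrix.nonsing_inv_mul C hdetC] using h2
      rw [hq', hu0, mulVec_zero]
  have hspan : LinearMap.range M₀.mulVecLin ⊔ Submodule.span ℂ {q} = ⊤ := by
    apply Submodule.eq_top_of_finrank_eq
    have hsum := Submodule.finrank_sup_add_finrank_inf_eq
      (LinearMap.range M₀.mulVecLin) (Submodule.span ℂ {q})
    rw [hinf] at hsum
    have hrank : Module.finrank ℂ (LinearMap.range M₀.mulVecLin) = m := by
      rw [LinearMap.finrank_range_of_inj hM₀inj, Module.finrank_fin_fun]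
    have hq1 : Module.finrank ℂ (Submodule.span ℂ ({q} : Set (Fin N → ℂ))) = 1 :=
      finrank_span_singleton hq0
    simp only [hrank, hq1, finrank_bot, add_zero, Module.finrank_fin_fun] at hsum ⊢
    omega
  have hS : Qm + c • vecMulVec q (star q) = 1 := by
    apply eq_one_of_mulVec
    intro v
    have hv : v ∈ LinearMap.range M₀.mulVecLin ⊔ Submodule.span ℂ {q} :=
      hspan ▸ Submodule.mem_top
    obtain ⟨y, hy, z, hz, rfl⟩ := Submodule.mem_sup.mp hv
    obtain ⟨u, rfl⟩ := hy
    obtain ⟨a, rfl⟩ := Submodule.mem_span_singleton.mp hz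
    rw [mulVecLin_apply]
    have e1 : Qm *ᵥ (M₀ *ᵥ u) = M₀ *ᵥ u := by
      rw [mulVec_mulVec]
      rw [show Qm * M₀ = M₀ from by
        rw [hQm]; simp only [Matrix.mul_assoc]; rw [← hC, Matrix.nonsing_inv_mul C hdetC,
          Matrix.mul_one]]
    have e2 : vecMulVec q (star q) *ᵥ (M₀ *ᵥ u) = 0 := by
      rw [vecMulVec_mulVec, dotProduct_mulVec, hqM, zero_dotProduct, zero_smul]
    have e3 : Qm *ᵥ q = 0 := by
      rw [hQm, ← mulVec_mulVec, hq, mulVec_zero]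
    have e4 : c • (vecMulVec q (star q) *ᵥ q) = q := by
      rw [vecMulVec_mulVec, hτ, smul_smul, hcdef, inv_mul_cancel₀
        (Complex.ofReal_ne_zero.mpr hτpos.ne'), one_smul]
    simp only [add_mulVec, mulVec_add, mulVec_smul, smul_mulVec, e1, e2, e3,
      smul_zero, add_zero, zero_add, e4]
  have hQm1 : Qm = 1 - c • vecMulVec q (star q) := eq_sub_of_add_eq hS
  have htr : (C⁻¹ * (Pᴴ * P)).trace = A⁻¹.trace - c * (star q ⬝ᵥ (A⁻¹ *ᵥ q)) := by
    rw [hPP]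
    rw [show C⁻¹ * (M₀ᴴ * A⁻¹ * M₀) = C⁻¹ * (M₀ᴴ * A⁻¹) * M₀ from by
      simp only [Matrix.mul_assoc]]
    rw [Matrix.trace_mul_cycle]
    rw [show M₀ * C⁻¹ * (M₀ᴴ * A⁻¹) = Qm * A⁻¹ from by
      rw [hQm]; simp only [Matrix.mul_assoc]]
    rw [hQm1, Matrix.sub_mul, Matrix.one_mul, trace_sub, smul_mul_assoc, trace_smul,
      Matrix.trace_mul_comm, trace_mul_vecMulVec]
    rfl
  have hz := rayleigh hA k₀ hk q
  have hτre : (star q ⬝ᵥ q).re = τ := by rw [hτ, Complex.ofReal_re]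
  rw [hτre] at hz
  have hre : ((Pᴴ * A * P)⁻¹ * (Pᴴ * P)).trace.re
      = A⁻¹.trace.re - τ⁻¹ * (star q ⬝ᵥ (A⁻¹ *ᵥ q)).re := by
    rw [← hCdef, htr, Complex.sub_re, hcdef, ← Complex.ofReal_inv, Complex.re_ofReal_mul]
  rw [hre, trace_inv hA]
  have hb : (μ k₀)⁻¹ ≤ τ⁻¹ * (star q ⬝ᵥ (A⁻¹ *ᵥ q)).re := by
    rw [← div_eq_inv_mul, le_div_iff₀ hτpos]
    exact hz
  linarith

end


lemma mul_submatrix' {p : ℕ} (B X : Matrix (Fin N) (Fin N) ℂ) (e : Fin p → Fin N) :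
    B * (X.submatrix id e) = (B * X).submatrix id e := by
  ext i a; simp [mul_apply]

lemma submatrix_mul' {p : ℕ} (X B : Matrix (Fin N) (Fin N) ℂ) (e : Fin p → Fin N) :
    (X.submatrix e id) * B = (X * B).submatrix e id := by
  ext a j; simp [mul_apply]

lemma submatrix_mul_submatrix' {p : ℕ} (Y X : Matrix (Fin N) (Fin N) ℂ) (e : Fin p → Fin N) :
    (Y.submatrix e id) * (X.submatrix id e) = (Y * X).submatrix e e := by
  ext a b; simp [mul_apply]

lemma diagonal_inv' {p : ℕ} (d : Fin p → ℂ) (hd : ∀ a, d a ≠ 0) :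
    (diagonal d)⁻¹ = diagonal (fun a => (d a)⁻¹) := by
  apply inv_eq_right_inv
  rw [diagonal_mul_diagonal]
  ext i j
  rcases eq_or_ne i j with rfl | h
  · simp [mul_inv_cancel₀ (hd i)]
  · simp [diagonal_apply_ne _ h, one_apply_ne h]

lemma key_mem {n : ℕ} {A : Matrix (Fin (n+1)) (Fin (n+1)) ℂ} (hA : A.PosDef) (k : Fin (n+1)) :
    ∃ P : Matrix (Fin (n+1)) (Fin n) ℂ, Function.Injective P.mulVecLin ∧
      restTrace A 1 P = ∑ j ∈ Finset.univ.erase k, (hA.isHermitian.eigenvalues j)⁻¹ := by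
  classical
  set U : Matrix (Fin (n+1)) (Fin (n+1)) ℂ := (hA.isHermitian.eigenvectorUnitary : Matrix (Fin (n+1)) (Fin (n+1)) ℂ) with hU
  set μ := hA.isHermitian.eigenvalues with hμ
  set e : Fin n → Fin (n+1) := k.succAbove with he
  have hei : Function.Injective e := Fin.succAbove_right_injective
  refine ⟨U.submatrix id e, ?_, ?_⟩
  · have hUU : star U * U = 1 :=
      (Matrix.mem_unitaryGroup_iff').mp (hA.isHermitian.eigenvectorUnitary).2
    rw [← LinearMap.ker_eq_bot, LinearMap.ker_eq_bot']
    intro v hv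
    rw [mulVecLin_apply] at hv
    have h2 : ((1 : Matrix (Fin (n+1)) (Fin (n+1)) ℂ).submatrix id e) *ᵥ v = 0 := by
      rw [← hUU, ← mul_submatrix', ← mulVec_mulVec, hv, mulVec_zero]
    funext b
    have h3 := congrFun h2 (e b)
    simpa [mulVec, dotProduct, submatrix_apply, one_apply, hei.eq_iff] using h3
  · have hAP : (U.submatrix id e)ᴴ * A * (U.submatrix id e)
        = diagonal (fun a => (RCLike.ofReal (μ (e a)) : ℂ)) := by
      rw [conjTranspose_submatrix, submatrix_mul', submatrix_mul_submatrix',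
        ← Matrix.star_eq_conjTranspose, (by rw [← hA.isHermitian.conjStarAlgAut_star_eigenvectorUnitary, Unitary.conjStarAlgAut_apply,
          Unitary.coe_star, star_star] : star U * A * U = diagonal (RCLike.ofReal ∘ μ)),
        submatrix_diagonal _ e hei]
      rfl
    have hPP : (U.submatrix id e)ᴴ * (U.submatrix id e) = 1 := by
      rw [conjTranspose_submatrix, submatrix_mul_submatrix', ← Matrix.star_eq_conjTranspose,
        (Matrix.mem_unitaryGroup_iff').mp (hA.isHermitian.eigenvectorUnitary).2,
        submatrix_one e hei]
    have hd : ∀ a, (RCLike.ofReal (μ (e a)) : ℂ) ≠ 0 :=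
      fun a => Complex.ofReal_ne_zero.mpr (hA.eigenvalues_pos (e a)).ne'
    rw [restTrace, Matrix.mul_one, hAP, hPP, Matrix.mul_one, diagonal_inv' _ hd,
      trace_diagonal]
    rw [show (∑ a, ((fun a => (RCLike.ofReal (μ (e a)) : ℂ)) a)⁻¹).re
        = ∑ a, ((μ (e a))⁻¹ : ℝ) from by
      rw [Complex.re_sum]
      refine Finset.sum_congr rfl fun a _ => ?_
      rw [show ((RCLike.ofReal (μ (e a)) : ℂ))⁻¹ = (((μ (e a))⁻¹ : ℝ) : ℂ) from by push_cast; rfl,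
        Complex.ofReal_re]]
    have h4 := Fin.sum_univ_succAbove (fun j => (μ j)⁻¹) k
    have h5 := Finset.sum_erase_add Finset.univ (fun j => (μ j)⁻¹) (Finset.mem_univ k)
    rw [he]
    linarith

end JPAux

open JPAux in
/-- If `A` is an `N×N` positive definite Hermitian matrix with eigenvalues `λ_1, …, λ_N`,
then `P_{I_N}(A) = max_k Σ_{j ≠ k} λ_j⁻¹`. -/
theorem jP_identity_eq {N : ℕ} (hN : 0 < N) (A : Matrix (Fin N) (Fin N) ℂ) (hA : A.PosDef) :
    haveI : Nonempty (Fin N) := ⟨⟨0, hN⟩⟩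
    jP A 1 =
      Finset.univ.sup' Finset.univ_nonempty
        (fun k => ∑ j ∈ Finset.univ.erase k, (hA.isHermitian.eigenvalues j)⁻¹) := by
  obtain ⟨n, rfl⟩ : ∃ n, N = n + 1 := ⟨N - 1, (Nat.succ_pred_eq_of_pos hN).symm⟩
  set μ := hA.isHermitian.eigenvalues with hμ
  set f : Fin (n+1) → ℝ := fun k => ∑ j ∈ Finset.univ.erase k, (μ j)⁻¹ with hf
  set T : ℝ := Finset.univ.sup' Finset.univ_nonempty f with hT
  set S : Set ℝ := {x : ℝ | ∃ P : Matrix (Fin (n+1)) (Fin (n+1-1)) ℂ,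
    Function.Injective P.mulVecLin ∧ x = restTrace A 1 P} with hS
  obtain ⟨k₀, hk₀⟩ := Finite.exists_max μ
  have hboundS : ∀ x ∈ S, x ≤ T := by
    rintro x ⟨P, hPinj, rfl⟩
    have h1 := key_upper hA (m := n + 1 - 1) (by omega) k₀ hk₀ P hPinj
    have h2 : restTrace A 1 P = ((Pᴴ * A * P)⁻¹ * (Pᴴ * P)).trace.re := by
      rw [restTrace, Matrix.mul_one]
    have h3 : (∑ j, (μ j)⁻¹) - (μ k₀)⁻¹ = f k₀ := by
      have h4 := Finset.sum_erase_add Finset.univ (fun j => (μ j)⁻¹) (Finset.mem_univ k₀)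
      rw [hf]
      dsimp only
      linarith
    have h5 : f k₀ ≤ T := Finset.le_sup' f (Finset.mem_univ k₀)
    rw [h2]
    linarith
  have hmemS : T ∈ S := by
    obtain ⟨k₁, -, hk₁⟩ := Finset.exists_mem_eq_sup' Finset.univ_nonempty f
    obtain ⟨P, hPinj, hPval⟩ := key_mem hA k₁
    refine ⟨P, hPinj, ?_⟩
    rw [hT, hk₁]
    show (∑ j ∈ Finset.univ.erase k₁, (μ j)⁻¹) = restTrace A 1 P
    exact hPval.symm
  show jP A 1 = T
  rw [jP]
  exact le_antisymm (csSup_le ⟨T, hmemS⟩ hboundS) (le_csSup ⟨T, hboundS⟩ hmemS)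
end

section
/- Suppose A, B, C are N×N complex matrices such that the 2N×2N block matrix M = [[A, C],[C̄^T, B]] is positive definite Hermitian. Then P_{I_N}(A - C B^{-1} C̄^T) + tr(B^{-1}) ≤ P_{I_{2N}}(M), where I_N and I_{2N} are identity matrices of rank N and 2N. -/
open Matrix ComplexOrder

/- ### Auxiliary lemmas -/

open scoped MatrixOrder in
noncomputable def Matrix.PosSemidef.sqrt {n : Type*} [Fintype n] [DecidableEq n]
    {A : Matrix n n ℂ} (_ : A.PosSemidef) : Matrix n n ℂ := CFC.sqrt A

open scoped MatrixOrder in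
lemma Matrix.PosSemidef.posSemidef_sqrt {n : Type*} [Fintype n] [DecidableEq n]
    {A : Matrix n n ℂ} (hA : A.PosSemidef) : hA.sqrt.PosSemidef :=
  Matrix.nonneg_iff_posSemidef.mp (CFC.sqrt_nonneg A)

open scoped MatrixOrder in
lemma Matrix.PosSemidef.sqrt_mul_self {n : Type*} [Fintype n] [DecidableEq n]
    {A : Matrix n n ℂ} (hA : A.PosSemidef) : hA.sqrt * hA.sqrt = A :=
  CFC.sqrt_mul_sqrt_self A hA.nonneg

lemma JPaux.psd_trace_re_nonneg {n : Type*} [Fintype n] [DecidableEq n]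
    {X : Matrix n n ℂ} (hX : X.PosSemidef) : 0 ≤ X.trace.re := by
  have h : ∀ i, 0 ≤ (X i i).re := fun i => by
    have := hX.re_dotProduct_nonneg (Pi.single i 1)
    simpa [dotProduct, Matrix.mulVec, Pi.single_apply, Finset.mul_sum] using this
  rw [Matrix.trace, Complex.re_sum]
  exact Finset.sum_nonneg fun i _ => h i

lemma JPaux.trace_re_nonneg_mul_psd {n : Type*} [Fintype n] [DecidableEq n]
    {D X : Matrix n n ℂ} (hD : D.PosSemidef) (hX : X.PosSemidef) :
    0 ≤ (D * X).trace.re := by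
  have hT : hD.sqrt * hD.sqrt = D := hD.sqrt_mul_self
  have hTh : hD.sqrtᴴ = hD.sqrt := hD.posSemidef_sqrt.1
  have hpsd : (hD.sqrt * X * hD.sqrt).PosSemidef := by
    have := hX.conjTranspose_mul_mul_same hD.sqrt
    rwa [hTh] at this
  have h2 : (D * X).trace = (hD.sqrt * X * hD.sqrt).trace := by
    rw [trace_mul_cycle, hT]
  rw [h2]
  exact JPaux.psd_trace_re_nonneg hpsd

lemma JPaux.trace_re_le_of_psd_sub {n : Type*} [Fintype n] [DecidableEq n]
    {X Y : Matrix n n ℂ} (h : (Y - X).PosSemidef) : X.trace.re ≤ Y.trace.re := by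
  have h2 : 0 ≤ (Y - X).trace.re := JPaux.psd_trace_re_nonneg h
  rw [Matrix.trace_sub, Complex.sub_re] at h2
  linarith

lemma JPaux.posDef_conj_of_injective {n k : Type*} [Fintype n] [DecidableEq n] [Fintype k]
    {A : Matrix n n ℂ} (hA : A.PosDef) {P : Matrix n k ℂ}
    (hP : Function.Injective P.mulVecLin) : (Pᴴ * A * P).PosDef := by
  refine Matrix.PosDef.of_dotProduct_mulVec_pos (Matrix.isHermitian_conjTranspose_mul_mul P hA.1) fun x hx => ?_
  have hPx : P *ᵥ x ≠ 0 := by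
    intro h
    exact hx ((injective_iff_map_eq_zero P.mulVecLin).mp hP x
      (by simpa [Matrix.mulVecLin_apply] using h))
  simpa only [star_mulVec, dotProduct_mulVec, vecMul_vecMul] using hA.dotProduct_mulVec_pos hPx

lemma JPaux.trace_submatrix_equiv {m n : Type*} [Fintype m] [Fintype n]
    (e : m ≃ n) (X : Matrix n n ℂ) : (X.submatrix ⇑e ⇑e).trace = X.trace :=
  Fintype.sum_equiv e _ _ fun _ => rfl

lemma JPaux.trace_fromBlocks {m n : Type*} [Fintype m] [Fintype n]
    (W : Matrix m m ℂ) (X : Matrix m n ℂ) (Y : Matrix n m ℂ) (Z : Matrix n n ℂ) :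
    (Matrix.fromBlocks W X Y Z).trace = W.trace + Z.trace := by
  simp [Matrix.trace, Fintype.sum_sum_type, Matrix.fromBlocks, Matrix.diag]

lemma JPaux.posDef_submatrix_equiv {m n : Type*} [Fintype m] [Fintype n] [DecidableEq m]
    [DecidableEq n] {M : Matrix n n ℂ} (hM : M.PosDef) (e : m ≃ n) :
    (M.submatrix ⇑e ⇑e).PosDef := by
  refine Matrix.PosDef.of_dotProduct_mulVec_pos (hM.1.submatrix e) fun x hx => ?_
  have hx' : x ∘ ⇑e.symm ≠ 0 := by
    intro h
    apply hx
    funext i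
    simpa using congrFun h (e i)
  have key : star x ⬝ᵥ (M.submatrix ⇑e ⇑e *ᵥ x) = star (x ∘ ⇑e.symm) ⬝ᵥ (M *ᵥ (x ∘ ⇑e.symm)) := by
    rw [Matrix.submatrix_mulVec_equiv M x ⇑e e]
    have h3 : star x = (star (x ∘ ⇑e.symm)) ∘ ⇑e := by funext i; simp
    rw [h3]
    exact comp_equiv_dotProduct_comp_equiv _ _ e
  rw [key]
  exact hM.dotProduct_mulVec_pos hx'

lemma JPaux.exists_posSemidef_sub_smul {n : ℕ} {M : Matrix (Fin n) (Fin n) ℂ} (hM : M.PosDef) :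
    ∃ c : ℝ, 0 < c ∧ (M - (c : ℂ) • 1).PosSemidef := by
  rcases Nat.eq_zero_or_pos n with h0 | hn
  · subst h0
    refine ⟨1, one_pos, ⟨Subsingleton.elim _ _, fun x => by rw [Subsingleton.elim x 0]; simp⟩⟩
  · haveI : Nonempty (Fin n) := Fin.pos_iff_nonempty.mp hn
    set ev := hM.1.eigenvalues with hev
    set c := Finset.univ.inf' Finset.univ_nonempty ev with hc
    have hcpos : 0 < c := by
      rw [hc, Finset.lt_inf'_iff]
      exact fun i _ => hM.eigenvalues_pos i
    set U := (hM.1.eigenvectorUnitary : Matrix (Fin n) (Fin n) ℂ) with hU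
    have hUU : U * star U = 1 := (Matrix.mem_unitaryGroup_iff).mp hM.1.eigenvectorUnitary.2
    have hdiag : M - (c : ℂ) • 1 =
        U * (Matrix.diagonal (fun i => ((ev i - c : ℝ) : ℂ))) * star U := by
      have hsp := hM.1.spectral_theorem
      simp only [Unitary.conjStarAlgAut_apply, Unitary.coe_star] at hsp
      have h1 : ((c : ℂ) • (1 : Matrix (Fin n) (Fin n) ℂ)) = U * ((c : ℂ) • 1) * star U := by
        rw [Matrix.mul_smul, Matrix.mul_one, Matrix.smul_mul, hUU]
      have h2 : Matrix.diagonal (RCLike.ofReal ∘ ev) - (c : ℂ) • 1 =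
          Matrix.diagonal (fun i => ((ev i - c : ℝ) : ℂ)) := by
        ext i j
        by_cases h : i = j <;>
          simp [Matrix.sub_apply, Matrix.smul_apply, Matrix.one_apply, Matrix.diagonal_apply, h,
            Complex.ofReal_sub]
      calc M - (c : ℂ) • 1
          = U * Matrix.diagonal (RCLike.ofReal ∘ ev) * star U - U * ((c : ℂ) • 1) * star U := by
            rw [← hsp, ← h1]
        _ = U * (Matrix.diagonal (RCLike.ofReal ∘ ev) - (c : ℂ) • 1) * star U := by
            rw [Matrix.mul_sub, Matrix.sub_mul]
        _ = U * (Matrix.diagonal (fun i => ((ev i - c : ℝ) : ℂ))) * star U := by rw [h2]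
    refine ⟨c, hcpos, ?_⟩
    rw [hdiag, Matrix.star_eq_conjTranspose]
    refine Matrix.PosSemidef.mul_mul_conjTranspose_same ?_ U
    refine Matrix.posSemidef_diagonal_iff.mpr fun i => ?_
    rw [Complex.zero_le_real]
    have : c ≤ ev i := Finset.inf'_le _ (Finset.mem_univ i)
    linarith

lemma JPaux.restTrace_one_le {n k : ℕ} {M : Matrix (Fin n) (Fin n) ℂ} (hM : M.PosDef)
    {c : ℝ} (hc : 0 < c) (hcM : (M - (c : ℂ) • 1).PosSemidef)
    {Q : Matrix (Fin n) (Fin k) ℂ} (hQ : Function.Injective Q.mulVecLin) :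
    restTrace M 1 Q ≤ k / c := by
  have hH : (Qᴴ * M * Q).PosDef := JPaux.posDef_conj_of_injective hM hQ
  set H := Qᴴ * M * Q with hHdef
  have hHi : H⁻¹.PosDef := hH.inv
  obtain ⟨Sq, hSh, hSS⟩ : ∃ Sq : Matrix (Fin k) (Fin k) ℂ, Sqᴴ = Sq ∧ Sq * Sq = H⁻¹ :=
    ⟨hHi.posSemidef.sqrt, hHi.posSemidef.posSemidef_sqrt.1, hHi.posSemidef.sqrt_mul_self⟩
  have hdet : IsUnit H.det := isUnit_iff_ne_zero.mpr hH.det_pos.ne'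
  set G := Qᴴ * Q with hGdef
  have hG : restTrace M 1 Q = (Sq * G * Sq).trace.re := by
    rw [restTrace, Matrix.mul_one, trace_mul_cycle, hSS]
  have h1 : H - (c : ℂ) • G = Qᴴ * (M - (c : ℂ) • 1) * Q := by
    rw [Matrix.mul_sub, Matrix.sub_mul, Matrix.mul_smul, Matrix.smul_mul, Matrix.mul_one]
  have h2 : Sq * H * Sq - (c : ℂ) • (Sq * G * Sq) = Sq * (H - (c : ℂ) • G) * Sq := by
    rw [Matrix.mul_sub, Matrix.sub_mul, Matrix.mul_smul, Matrix.smul_mul]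
  have hpsd : (Sq * H * Sq - (c : ℂ) • (Sq * G * Sq)).PosSemidef := by
    rw [h2, h1]
    have := (Matrix.PosSemidef.conjTranspose_mul_mul_same hcM Q).conjTranspose_mul_mul_same Sq
    rwa [hSh] at this
  have htr : (Sq * H * Sq).trace = (k : ℂ) := by
    rw [trace_mul_cycle, hSS, Matrix.nonsing_inv_mul H hdet, Matrix.trace_one]
    simp
  have hle : ((c : ℂ) • (Sq * G * Sq)).trace.re ≤ (Sq * H * Sq).trace.re :=
    JPaux.trace_re_le_of_psd_sub hpsd
  rw [Matrix.trace_smul, htr] at hle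
  have hfin : c * (Sq * G * Sq).trace.re ≤ (k : ℝ) := by
    simpa [Complex.smul_re] using hle
  rw [hG, le_div_iff₀ hc, mul_comm]
  exact hfin

lemma JPaux.jP_eq_zero {n : ℕ} (hn : n = 0) (A B : Matrix (Fin n) (Fin n) ℂ) : jP A B = 0 := by
  haveI h1 : IsEmpty (Fin (n - 1)) := by
    have h : n - 1 = 0 := by omega
    rw [h]; infer_instance
  have hset : {x : ℝ | ∃ P : Matrix (Fin n) (Fin (n - 1)) ℂ,
      Function.Injective P.mulVecLin ∧ x = restTrace A B P} = {0} := by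
    ext x
    simp only [Set.mem_setOf_eq, Set.mem_singleton_iff]
    constructor
    · rintro ⟨P, _, rfl⟩
      simp [restTrace, Matrix.trace]
    · rintro rfl
      refine ⟨0, ?_, by simp [restTrace, Matrix.trace]⟩
      rw [injective_iff_map_eq_zero]
      intro v _
      funext i
      exact isEmptyElim i
  rw [jP, hset, csSup_singleton]

lemma JPaux.inj_witness {N : ℕ} :
    Function.Injective (Matrix.of fun (i : Fin N) (j : Fin (N - 1)) =>
      if (i : ℕ) = (j : ℕ) then (1 : ℂ) else 0).mulVecLin := by
  rw [injective_iff_map_eq_zero]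
  intro v hv
  funext j
  have hj : (j : ℕ) < N := lt_of_lt_of_le j.2 (Nat.sub_le N 1)
  have h := congrFun hv ⟨(j : ℕ), hj⟩
  simp only [Matrix.mulVecLin_apply, Matrix.mulVec, dotProduct, Pi.zero_apply] at h
  rw [Finset.sum_eq_single j] at h
  · simpa using h
  · intro b _ hb
    simp only [Matrix.of_apply]
    rw [if_neg, zero_mul]
    exact fun h' => hb (Fin.ext (by simpa using h'.symm))
  · intro h'
    exact absurd (Finset.mem_univ j) h'

lemma JPaux.inj_blocks {N k : ℕ} {P : Matrix (Fin N) (Fin k) ℂ}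
    (hP : Function.Injective P.mulVecLin) (X : Matrix (Fin N) (Fin k) ℂ) :
    Function.Injective (Matrix.fromBlocks P (0 : Matrix (Fin N) (Fin N) ℂ) X
      (1 : Matrix (Fin N) (Fin N) ℂ)).mulVecLin := by
  rw [injective_iff_map_eq_zero]
  intro v hv
  rw [Matrix.mulVecLin_apply, Matrix.fromBlocks_mulVec] at hv
  have h1 : P *ᵥ (v ∘ Sum.inl) + (0 : Matrix (Fin N) (Fin N) ℂ) *ᵥ (v ∘ Sum.inr) = 0 := by
    funext i; exact congrFun hv (Sum.inl i)
  have h2 : X *ᵥ (v ∘ Sum.inl) + (1 : Matrix (Fin N) (Fin N) ℂ) *ᵥ (v ∘ Sum.inr) = 0 := by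
    funext i; exact congrFun hv (Sum.inr i)
  rw [Matrix.zero_mulVec, add_zero] at h1
  have hvl : v ∘ Sum.inl = 0 :=
    (injective_iff_map_eq_zero P.mulVecLin).mp hP _ (by simpa [Matrix.mulVecLin_apply] using h1)
  rw [hvl, Matrix.mulVec_zero, zero_add, Matrix.one_mulVec] at h2
  funext i
  cases i with
  | inl i => exact congrFun hvl i
  | inr i => exact congrFun h2 i

lemma JPaux.block_key {N k : ℕ} (A B C : Matrix (Fin N) (Fin N) ℂ) (P : Matrix (Fin N) (Fin k) ℂ)
    (hBh : Bᴴ = B) (hBu : IsUnit B.det) :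
    (Matrix.fromBlocks P 0 (-(B⁻¹ * Cᴴ * P)) 1)ᴴ * (Matrix.fromBlocks A C Cᴴ B) *
      (Matrix.fromBlocks P 0 (-(B⁻¹ * Cᴴ * P)) 1) =
    Matrix.fromBlocks (Pᴴ * (A - C * B⁻¹ * Cᴴ) * P) 0 0 B := by
  have hBB : B⁻¹ * B = 1 := Matrix.nonsing_inv_mul B hBu
  have cancel1 : ∀ (Y : Matrix (Fin N) (Fin k) ℂ), B * (B⁻¹ * Y) = Y := fun Y => by
    rw [← Matrix.mul_assoc, Matrix.mul_nonsing_inv B hBu, Matrix.one_mul]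
  have hXh : (-(B⁻¹ * Cᴴ * P))ᴴ = -(Pᴴ * C * B⁻¹) := by
    rw [Matrix.conjTranspose_neg, Matrix.conjTranspose_mul, Matrix.conjTranspose_mul,
      Matrix.conjTranspose_nonsing_inv, hBh, Matrix.conjTranspose_conjTranspose,
      Matrix.mul_assoc]
  rw [Matrix.fromBlocks_conjTranspose, hXh, Matrix.conjTranspose_zero,
    Matrix.conjTranspose_one, Matrix.fromBlocks_multiply, Matrix.fromBlocks_multiply]
  rw [Matrix.fromBlocks_inj]
  refine ⟨?_, ?_, ?_, ?_⟩ <;>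
    simp [Matrix.mul_assoc, hBB, cancel1, Matrix.mul_sub, Matrix.sub_mul, Matrix.mul_neg,
      Matrix.neg_mul, sub_eq_add_neg, Matrix.add_mul, Matrix.mul_add]

/-- If the block matrix `M = [[A, C], [Cᴴ, B]]` is positive definite Hermitian, then
`P_{I_N}(A - C B⁻¹ Cᴴ) + tr(B⁻¹) ≤ P_{I_{2N}}(M)`. -/
theorem jP_schur_complement {N : ℕ} (A B C : Matrix (Fin N) (Fin N) ℂ)
    (hM : (Matrix.fromBlocks A C Cᴴ B).PosDef) :
    jP (A - C * B⁻¹ * Cᴴ) 1 + (B⁻¹).trace.re ≤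
      jP ((Matrix.fromBlocks A C Cᴴ B).submatrix
            (finSumFinEquiv (m := N) (n := N)).symm (finSumFinEquiv (m := N) (n := N)).symm) 1 := by
  classical
  by_cases hN : N = 0
  · subst hN
    rw [JPaux.jP_eq_zero rfl, JPaux.jP_eq_zero rfl]
    simp [Matrix.trace]
  -- main case
  have hN1 : 1 ≤ N := Nat.one_le_iff_ne_zero.mpr hN
  set M := Matrix.fromBlocks A C Cᴴ B with hMdef
  set S := A - C * B⁻¹ * Cᴴ with hSdef
  -- B is positive definite
  have hB : B.PosDef := by
    refine Matrix.PosDef.of_dotProduct_mulVec_pos (Matrix.isHermitian_fromBlocks_iff.mp hM.1).2.2.2 fun x hx => ?_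
    have hx' : (Sum.elim (0 : Fin N → ℂ) x) ≠ 0 := by
      intro h
      exact hx (by funext i; simpa using congrFun h (Sum.inr i))
    have := hM.dotProduct_mulVec_pos hx'
    simpa [hMdef, Matrix.fromBlocks_mulVec, Function.star_sumElim,
      sumElim_dotProduct_sumElim] using this
  have hBdet : IsUnit B.det := isUnit_iff_ne_zero.mpr hB.det_pos.ne'
  haveI : Invertible B := hB.isUnit.invertible
  -- the Schur complement is positive definite
  have hS : S.PosDef := by
    refine Matrix.PosDef.of_dotProduct_mulVec_pos ((Matrix.IsHermitian.fromBlocks₂₂ A C hB.1).mp hM.1) fun x hx => ?_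
    set y := -((B⁻¹ * Cᴴ) *ᵥ x) with hy
    have hxy : (Sum.elim x y) ≠ 0 := by
      intro h
      exact hx (by funext i; simpa using congrFun h (Sum.inl i))
    have hpos := hM.dotProduct_mulVec_pos hxy
    rw [Matrix.dotProduct_mulVec, Matrix.schur_complement_eq₂₂ A C x y hB.1] at hpos
    rw [add_neg_cancel] at hpos
    simpa [Matrix.dotProduct_mulVec] using hpos
  set e := finSumFinEquiv (m := N) (n := N) with hedef
  set M' := M.submatrix ⇑e.symm ⇑e.symm with hM'def
  have hM' : M'.PosDef := JPaux.posDef_submatrix_equiv hM e.symm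
  obtain ⟨c, hc, hcM⟩ := JPaux.exists_posSemidef_sub_smul hM'
  -- the target set is bounded above
  have hbdd : BddAbove {x : ℝ | ∃ Q : Matrix (Fin (N + N)) (Fin (N + N - 1)) ℂ,
      Function.Injective Q.mulVecLin ∧ x = restTrace M' 1 Q} := by
    refine ⟨(N + N - 1 : ℕ) / c, ?_⟩
    rintro x ⟨Q, hQ, rfl⟩
    exact JPaux.restTrace_one_le hM' hc hcM hQ
  -- the source set is nonempty
  set P₀ : Matrix (Fin N) (Fin (N - 1)) ℂ :=
    Matrix.of fun (i : Fin N) (j : Fin (N - 1)) => if (i : ℕ) = (j : ℕ) then (1 : ℂ) else 0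
  have hne : {x : ℝ | ∃ P : Matrix (Fin N) (Fin (N - 1)) ℂ,
      Function.Injective P.mulVecLin ∧ x = restTrace S 1 P}.Nonempty :=
    ⟨restTrace S 1 P₀, P₀, JPaux.inj_witness, rfl⟩
  set f' : Fin (N + N - 1) ≃ (Fin (N - 1) ⊕ Fin N) :=
    ((finSumFinEquiv (m := N - 1) (n := N)).trans
      (finCongr (by omega : (N - 1) + N = N + N - 1))).symm with hf'def
  -- key step: every element of the source set plus tr(B⁻¹) is bounded by the target sup
  have key : ∀ (P : Matrix (Fin N) (Fin (N - 1)) ℂ), Function.Injective P.mulVecLin →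
      restTrace S 1 P + (B⁻¹).trace.re ≤
        sSup {x : ℝ | ∃ Q : Matrix (Fin (N + N)) (Fin (N + N - 1)) ℂ,
          Function.Injective Q.mulVecLin ∧ x = restTrace M' 1 Q} := by
    intro P hP
    set X := -(B⁻¹ * Cᴴ * P) with hXdef
    set Q' := Matrix.fromBlocks P (0 : Matrix (Fin N) (Fin N) ℂ) X
      (1 : Matrix (Fin N) (Fin N) ℂ) with hQ'def
    set Q := Q'.submatrix ⇑e.symm ⇑f' with hQdef
    have hQ'inj : Function.Injective Q'.mulVecLin := JPaux.inj_blocks hP X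
    have hQinj : Function.Injective Q.mulVecLin := by
      rw [injective_iff_map_eq_zero]
      intro v hv
      rw [Matrix.mulVecLin_apply, hQdef, Matrix.submatrix_mulVec_equiv Q' v ⇑e.symm f'] at hv
      have hq : Q' *ᵥ (v ∘ ⇑f'.symm) = 0 := by
        funext i
        simpa using congrFun hv (e i)
      have hv0 : v ∘ ⇑f'.symm = 0 :=
        (injective_iff_map_eq_zero Q'.mulVecLin).mp hQ'inj _
          (by simpa [Matrix.mulVecLin_apply] using hq)
      funext i
      simpa using congrFun hv0 (f' i)
    -- identify the restricted trace
    have keyM : Qᴴ * M' * Q = (Q'ᴴ * M * Q').submatrix ⇑f' ⇑f' := by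
      rw [hQdef, hM'def]
      simp only [Matrix.conjTranspose_submatrix, Matrix.submatrix_mul_equiv]
    have keyG : Qᴴ * (1 : Matrix (Fin (N + N)) (Fin (N + N)) ℂ) * Q =
        (Q'ᴴ * Q').submatrix ⇑f' ⇑f' := by
      rw [Matrix.mul_one, hQdef]
      simp only [Matrix.conjTranspose_submatrix, Matrix.submatrix_mul_equiv]
    have hblock : Q'ᴴ * M * Q' = Matrix.fromBlocks (Pᴴ * S * P) 0 0 B := by
      rw [hQ'def, hXdef, hMdef, hSdef]
      exact JPaux.block_key A B C P hB.1.eq hBdet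
    have hD : (Pᴴ * S * P).PosDef := JPaux.posDef_conj_of_injective hS hP
    have hDu : IsUnit (Pᴴ * S * P) := hD.isUnit
    have hBu : IsUnit B := hB.isUnit
    have hinv : (Matrix.fromBlocks (Pᴴ * S * P) 0 0 B)⁻¹ =
        Matrix.fromBlocks (Pᴴ * S * P)⁻¹ 0 0 B⁻¹ := by
      rw [Matrix.inv_fromBlocks_zero₂₁_of_isUnit_iff _ _ _ (iff_of_true hDu hBu)]
      simp
    have hQ'Q' : Q'ᴴ * Q' = Matrix.fromBlocks (Pᴴ * P + Xᴴ * X) Xᴴ X 1 := by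
      rw [hQ'def, Matrix.fromBlocks_conjTranspose, Matrix.fromBlocks_multiply]
      simp
    have hrt : restTrace M' 1 Q =
        ((Pᴴ * S * P)⁻¹ * (Pᴴ * P)).trace.re + ((Pᴴ * S * P)⁻¹ * (Xᴴ * X)).trace.re
          + (B⁻¹).trace.re := by
      rw [restTrace, keyM, keyG, Matrix.inv_submatrix_equiv, Matrix.submatrix_mul_equiv,
        JPaux.trace_submatrix_equiv, hblock, hQ'Q', hinv, Matrix.fromBlocks_multiply,
        JPaux.trace_fromBlocks]
      rw [Matrix.zero_mul, Matrix.zero_mul, add_zero, zero_add, Matrix.mul_one, Matrix.mul_add,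
        Matrix.trace_add]
      simp [Complex.add_re]
    have heps : 0 ≤ ((Pᴴ * S * P)⁻¹ * (Xᴴ * X)).trace.re :=
      JPaux.trace_re_nonneg_mul_psd hD.inv.posSemidef (Matrix.posSemidef_conjTranspose_mul_self X)
    have hmem : restTrace M' 1 Q ∈ {x : ℝ | ∃ Q : Matrix (Fin (N + N)) (Fin (N + N - 1)) ℂ,
        Function.Injective Q.mulVecLin ∧ x = restTrace M' 1 Q} := ⟨Q, hQinj, rfl⟩
    have hle := le_csSup hbdd hmem
    have hrS : restTrace S 1 P = ((Pᴴ * S * P)⁻¹ * (Pᴴ * P)).trace.re := by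
      rw [restTrace, Matrix.mul_one]
    linarith
  unfold jP
  have hfinal : sSup {x : ℝ | ∃ P : Matrix (Fin N) (Fin (N - 1)) ℂ,
      Function.Injective P.mulVecLin ∧ x = restTrace S 1 P} ≤
      sSup {x : ℝ | ∃ Q : Matrix (Fin (N + N)) (Fin (N + N - 1)) ℂ,
        Function.Injective Q.mulVecLin ∧ x = restTrace M' 1 Q} - (B⁻¹).trace.re := by
    refine csSup_le hne ?_
    rintro x ⟨P, hP, rfl⟩
    have := key P hP
    linarith
  linarith
end

section
/- Let ω and χ be Kähler forms (positive definite Hermitian (1,1)-forms at a point) on an n-dimensional complex vector space with n ≥ 2. If n ω^{n-1} - (n-1) ω^{n-2} ∧ χ > 0 as an (n-1,n-1)-form (i.e., its wedge with any nonzero positive (1,1)-form is a positive volume form), then for every l with 1 ≤ l ≤ n-1, n ω^l - l ω^{l-1} ∧ χ > 0 as an (l,l)-form, in the sense that its wedge product with θ^{n-l} is positive for every Kähler form θ. -/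
open Matrix ComplexOrder

namespace HQAux

open Matrix

/-- Invariance of restTrace under change of basis of the subspace. -/
lemma restTrace_mul {n k : ℕ} (A B : Matrix (Fin n) (Fin n) ℂ)
    (P : Matrix (Fin n) (Fin k) ℂ) (S : Matrix (Fin k) (Fin k) ℂ) (hS : IsUnit S.det) :
    restTrace A B (P * S) = restTrace A B P := by
  have hSH : IsUnit (Sᴴ).det := by
    rw [Matrix.det_conjTranspose]; exact hS.star
  unfold restTrace
  have h1 : (P * S)ᴴ * A * (P * S) = Sᴴ * (Pᴴ * A * P) * S := by
    simp only [Matrix.conjTranspose_mul, Matrix.mul_assoc]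
  have h2 : (P * S)ᴴ * B * (P * S) = Sᴴ * (Pᴴ * B * P) * S := by
    simp only [Matrix.conjTranspose_mul, Matrix.mul_assoc]
  rw [h1, h2]
  have h3 : (Sᴴ * (Pᴴ * A * P) * S)⁻¹ = S⁻¹ * ((Pᴴ * A * P)⁻¹ * (Sᴴ)⁻¹) := by
    rw [Matrix.mul_inv_rev, Matrix.mul_inv_rev]
  rw [h3]
  have h4 : S⁻¹ * ((Pᴴ * A * P)⁻¹ * Sᴴ⁻¹) * (Sᴴ * (Pᴴ * B * P) * S)
      = S⁻¹ * ((Pᴴ * A * P)⁻¹ * (Pᴴ * B * P) * S) := by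
    have : Sᴴ⁻¹ * Sᴴ = 1 := Matrix.nonsing_inv_mul _ hSH
    calc S⁻¹ * ((Pᴴ * A * P)⁻¹ * Sᴴ⁻¹) * (Sᴴ * (Pᴴ * B * P) * S)
        = S⁻¹ * ((Pᴴ * A * P)⁻¹ * ((Sᴴ⁻¹ * Sᴴ) * ((Pᴴ * B * P) * S))) := by
          simp only [Matrix.mul_assoc]
      _ = S⁻¹ * ((Pᴴ * A * P)⁻¹ * (Pᴴ * B * P) * S) := by
          rw [this, Matrix.one_mul]; simp only [Matrix.mul_assoc]
  rw [h4, Matrix.trace_mul_comm]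
  have : (Pᴴ * A * P)⁻¹ * (Pᴴ * B * P) * S * S⁻¹ = (Pᴴ * A * P)⁻¹ * (Pᴴ * B * P) := by
    rw [Matrix.mul_assoc, Matrix.mul_nonsing_inv _ hS, Matrix.mul_one]
  rw [this]

lemma inj_of_left_inverse {a b : ℕ} (A : Matrix (Fin a) (Fin b) ℂ)
    (B : Matrix (Fin b) (Fin a) ℂ) (hAB : A * B = 1) :
    Function.Injective B.mulVecLin := by
  have hcomp : A.mulVecLin.comp B.mulVecLin = LinearMap.id := by
    rw [← Matrix.mulVecLin_mul, hAB, Matrix.mulVecLin_one]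
  have key : ∀ v, A.mulVecLin (B.mulVecLin v) = v := fun v => by
    rw [← LinearMap.comp_apply, hcomp, LinearMap.id_apply]
  intro x y hxy
  rw [← key x, ← key y, hxy]

lemma entry_formula {N m : ℕ} (M : Matrix (Fin N) (Fin N) ℂ) (Q : Matrix (Fin N) (Fin m) ℂ)
    (a b : Fin m) :
    (Qᴴ * M * Q) a b = star (fun i => Q i a) ⬝ᵥ M *ᵥ (fun i => Q i b) := by
  simp only [Matrix.mul_apply, Matrix.conjTranspose_apply, dotProduct, Matrix.mulVec,
    Pi.star_apply, Finset.sum_mul, Finset.mul_sum]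
  rw [Finset.sum_comm]
  apply Finset.sum_congr rfl
  intro i _
  apply Finset.sum_congr rfl
  intro j _
  ring

lemma row_formula {N m : ℕ} (M : Matrix (Fin N) (Fin N) ℂ) (P : Matrix (Fin N) (Fin m) ℂ)
    (x : Fin N → ℂ) (a : Fin m) :
    ((Pᴴ * M) *ᵥ x) a = star (fun i => P i a) ⬝ᵥ M *ᵥ x := by
  simp only [Matrix.mulVec, Matrix.mul_apply, Matrix.conjTranspose_apply, dotProduct,
    Pi.star_apply, Finset.sum_mul, Finset.mul_sum]
  rw [Finset.sum_comm]
  apply Finset.sum_congr rfl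
  intro i _
  apply Finset.sum_congr rfl
  intro j _
  ring

lemma herm_swap {N : ℕ} {M : Matrix (Fin N) (Fin N) ℂ} (hM : M.IsHermitian)
    (x y : Fin N → ℂ) :
    star x ⬝ᵥ M *ᵥ y = star (star y ⬝ᵥ M *ᵥ x) := by
  rw [star_dotProduct]
  congr 1
  rw [Matrix.star_mulVec, hM, ← Matrix.dotProduct_mulVec]

open scoped MatrixOrder in
/-- Orthonormalization: replace `P` by `P * S` so that `(P*S)ᴴ ω (P*S) = 1`. -/
lemma exists_orthonormal {n k : ℕ} (ω : Matrix (Fin n) (Fin n) ℂ) (hω : ω.PosDef)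
    (P : Matrix (Fin n) (Fin k) ℂ) (hP : Function.Injective P.mulVecLin) :
    ∃ S : Matrix (Fin k) (Fin k) ℂ, IsUnit S.det ∧ (P * S)ᴴ * ω * (P * S) = 1 := by
  have hM : (Pᴴ * ω * P).PosDef := by
    refine Matrix.PosDef.of_dotProduct_mulVec_pos (Matrix.isHermitian_conjTranspose_mul_mul P hω.1) fun x hx => ?_
    have h1 : P *ᵥ x ≠ 0 := by
      intro h0
      apply hx
      apply hP
      simp only [Matrix.mulVecLin_apply, h0, Matrix.mulVec_zero]
    simpa only [Matrix.star_mulVec, Matrix.dotProduct_mulVec, Matrix.vecMul_vecMul]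
      using hω.dotProduct_mulVec_pos h1
  set R := CFC.sqrt (Pᴴ * ω * P) with hRdef
  have hRR : R * R = Pᴴ * ω * P := CFC.sqrt_mul_sqrt_self _ hM.posSemidef.nonneg
  have hRh : Rᴴ = R := (CFC.sqrt_nonneg (Pᴴ * ω * P)).posSemidef.1
  have hRdet : IsUnit R.det := by
    -- R * R = M is invertible, hence R is
    have hMdet : IsUnit (Pᴴ * ω * P).det := hM.det_pos.ne'.isUnit
    rw [← hRR, Matrix.det_mul] at hMdet
    exact isUnit_of_mul_isUnit_left hMdet
  refine ⟨R⁻¹, ?_, ?_⟩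
  · exact R.isUnit_nonsing_inv_det hRdet
  · have h1 : (P * R⁻¹)ᴴ * ω * (P * R⁻¹) = (R⁻¹)ᴴ * (Pᴴ * ω * P) * R⁻¹ := by
      simp only [Matrix.conjTranspose_mul, Matrix.mul_assoc]
    rw [h1, Matrix.conjTranspose_nonsing_inv, hRh, ← hRR]
    calc R⁻¹ * (R * R) * R⁻¹ = (R⁻¹ * R) * (R * R⁻¹) := by simp only [Matrix.mul_assoc]
      _ = 1 := by rw [Matrix.nonsing_inv_mul _ hRdet, Matrix.mul_nonsing_inv _ hRdet, Matrix.one_mul]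


/-- restTrace of a matrix with orthonormal columns. -/
lemma restTrace_of_orthonormal {n k : ℕ} (ω χ : Matrix (Fin n) (Fin n) ℂ)
    (P : Matrix (Fin n) (Fin k) ℂ) (hPω : Pᴴ * ω * P = 1) :
    restTrace ω χ P = (Pᴴ * χ * P).trace.re := by
  unfold restTrace
  have h1 : (1 : Matrix (Fin k) (Fin k) ℂ)⁻¹ = 1 :=
    Matrix.inv_eq_left_inv (Matrix.one_mul 1)
  rw [hPω, h1, Matrix.one_mul]

/-- Key monotonicity step: enlarge the subspace by one dimension without
decreasing the restricted trace. -/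
lemma step {n k : ℕ} (ω χ : Matrix (Fin n) (Fin n) ℂ) (hω : ω.PosDef) (hχ : χ.PosDef)
    (hk : k < n) (P₀ : Matrix (Fin n) (Fin k) ℂ) (hP₀ : Function.Injective P₀.mulVecLin) :
    ∃ Q : Matrix (Fin n) (Fin (k + 1)) ℂ, Function.Injective Q.mulVecLin ∧
      restTrace ω χ P₀ ≤ restTrace ω χ Q := by
  obtain ⟨S, hS, hPω⟩ := exists_orthonormal ω hω P₀ hP₀
  set P : Matrix (Fin n) (Fin k) ℂ := P₀ * S with hPdef
  have hPinj : Function.Injective P.mulVecLin := by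
    exact inj_of_left_inverse _ _ hPω
  have hPrt : restTrace ω χ P₀ = restTrace ω χ P := (restTrace_mul ω χ P₀ S hS).symm
  -- find a vector not in the range of P
  have hrange : LinearMap.range P.mulVecLin ≠ ⊤ := by
    intro htop
    have h1 : Module.finrank ℂ (LinearMap.range P.mulVecLin) ≤ k := by
      have := LinearMap.finrank_range_le P.mulVecLin
      simpa [Module.finrank_fin_fun] using this
    rw [htop, finrank_top] at h1
    simp [Module.finrank_fin_fun] at h1
    omega
  have hex : ∃ v, v ∉ LinearMap.range P.mulVecLin := by
    by_contra hc
    push_neg at hc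
    exact hrange (Submodule.eq_top_iff'.mpr hc)
  obtain ⟨v, hv⟩ := hex
  set w : Fin n → ℂ := v - P *ᵥ ((Pᴴ * ω) *ᵥ v) with hwdef
  have hw : w ≠ 0 := by
    intro h0
    apply hv
    refine ⟨(Pᴴ * ω) *ᵥ v, ?_⟩
    rw [Matrix.mulVecLin_apply]
    have h0' : v - P *ᵥ ((Pᴴ * ω) *ᵥ v) = 0 := h0
    have := sub_eq_zero.mp h0'
    exact this.symm
  have horth : (Pᴴ * ω) *ᵥ w = 0 := by
    rw [hwdef, Matrix.mulVec_sub, Matrix.mulVec_mulVec, hPω,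
      Matrix.one_mulVec, sub_self]
  have hpos := hω.dotProduct_mulVec_pos hw
  set z : ℂ := star w ⬝ᵥ ω *ᵥ w with hzdef
  have hzre : 0 < z.re := by
    rw [Complex.lt_def] at hpos; simpa using hpos.1
  have hzim : z.im = 0 := by
    rw [Complex.lt_def] at hpos; simpa using hpos.2.symm
  set r : ℝ := z.re with hrdef
  have hz : z = (r : ℂ) := by
    apply Complex.ext <;> simp [hzim, hrdef]
  set s : ℂ := ((Real.sqrt r : ℝ) : ℂ)⁻¹ with hsdef
  have hss : s * star s * (r : ℂ) = 1 := by
    have h1 : star s = s := by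
      rw [hsdef]; simp
    rw [h1, hsdef, ← mul_inv]
    rw [← Complex.ofReal_mul, Real.mul_self_sqrt hzre.le]
    rw [inv_mul_cancel₀ (by exact_mod_cast hzre.ne')]
  set u : Fin n → ℂ := s • w with hudef
  set c : Fin (k + 1) → Fin n → ℂ := Fin.snoc (fun a i => P i a) u with hcdef
  set Q : Matrix (Fin n) (Fin (k + 1)) ℂ := Matrix.of (fun i j => c j i) with hQdef
  have hQcol : ∀ j, (fun i => Q i j) = c j := fun j => rfl
  have hQentry : ∀ (M : Matrix (Fin n) (Fin n) ℂ) (a b : Fin (k + 1)),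
      (Qᴴ * M * Q) a b = star (c a) ⬝ᵥ M *ᵥ c b := by
    intro M a b
    rw [entry_formula M Q a b, hQcol, hQcol]
  have hcs : ∀ a : Fin k, c a.castSucc = fun i => P i a := by
    intro a; rw [hcdef]; exact Fin.snoc_castSucc _ _ _
  have hcl : c (Fin.last k) = u := by rw [hcdef]; exact Fin.snoc_last _ _
  -- orthogonality facts
  have hPu : ∀ a : Fin k, star (fun i => P i a) ⬝ᵥ ω *ᵥ u = 0 := by
    intro a
    rw [hudef, Matrix.mulVec_smul, dotProduct_smul, ← row_formula, horth]
    simp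
  have huP : ∀ a : Fin k, star u ⬝ᵥ ω *ᵥ (fun i => P i a) = 0 := by
    intro a
    rw [herm_swap hω.1, hPu a, star_zero]
  have huu : star u ⬝ᵥ ω *ᵥ u = 1 := by
    rw [hudef, Matrix.mulVec_smul, dotProduct_smul, star_smul, smul_dotProduct]
    rw [smul_eq_mul, smul_eq_mul, ← hzdef, hz, ← mul_assoc]
    exact hss
  have hQω : Qᴴ * ω * Q = 1 := by
    ext a b
    rw [hQentry]
    refine Fin.lastCases ?_ ?_ a
    · refine Fin.lastCases ?_ ?_ b
      · rw [hcl, huu, Matrix.one_apply_eq]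
      · intro bb
        rw [hcl, hcs, huP bb, Matrix.one_apply_ne (by simp [Fin.ext_iff]; omega)]
    · intro aa
      refine Fin.lastCases ?_ ?_ b
      · rw [hcl, hcs, hPu aa, Matrix.one_apply_ne (by simp [Fin.ext_iff]; omega)]
      · intro bb
        rw [hcs, hcs, ← entry_formula ω P aa bb, hPω]
        by_cases hab : aa = bb
        · subst hab; rw [Matrix.one_apply_eq, Matrix.one_apply_eq]
        · rw [Matrix.one_apply_ne hab,
            Matrix.one_apply_ne (by simpa [Fin.castSucc_inj] using hab)]
  have hQinj : Function.Injective Q.mulVecLin := by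
    exact inj_of_left_inverse _ _ hQω
  refine ⟨Q, hQinj, ?_⟩
  rw [hPrt, restTrace_of_orthonormal ω χ P hPω, restTrace_of_orthonormal ω χ Q hQω]
  rw [Matrix.trace, Matrix.trace]
  simp only [Matrix.diag]
  rw [Fin.sum_univ_castSucc]
  have hdiag : ∀ a : Fin k, (Qᴴ * χ * Q) a.castSucc a.castSucc = (Pᴴ * χ * P) a a := by
    intro a
    rw [hQentry, hcs, entry_formula]
  rw [Finset.sum_congr rfl (fun a _ => hdiag a)]
  have hlast : 0 ≤ ((Qᴴ * χ * Q) (Fin.last k) (Fin.last k)).re := by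
    rw [hQentry, hcl]
    have h2 := hχ.posSemidef.dotProduct_mulVec_nonneg u
    rw [Complex.le_def] at h2
    simpa using h2.1
  rw [Complex.add_re]
  linarith

end HQAux

open HQAux in
/-- Let `ω, χ` be Kähler forms (positive definite Hermitian forms) on `ℂ^n`, `n ≥ 2`.
If `n ω^{n-1} - (n-1) ω^{n-2} ∧ χ > 0`, i.e. `tr_{ω|_V}(χ|_V) < n` on every hyperplane `V`,
then for every `1 ≤ l ≤ n-1`, `n ω^l - l ω^{l-1} ∧ χ > 0` as an `(l,l)`-form, i.e.
`tr_{ω|_W}(χ|_W) < n` on every `l`-dimensional subspace `W`. -/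
theorem hessian_quotient_lower_degree {n : ℕ} (hn : 2 ≤ n)
    (ω χ : Matrix (Fin n) (Fin n) ℂ) (hω : ω.PosDef) (hχ : χ.PosDef)
    (h : ∀ P : Matrix (Fin n) (Fin (n - 1)) ℂ,
      Function.Injective P.mulVecLin → restTrace ω χ P < n) :
    ∀ l : ℕ, 1 ≤ l → l ≤ n - 1 →
      ∀ P : Matrix (Fin n) (Fin l) ℂ,
        Function.Injective P.mulVecLin → restTrace ω χ P < n := by
  have key : ∀ d l, 1 ≤ l → l + d = n - 1 → ∀ P : Matrix (Fin n) (Fin l) ℂ,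
      Function.Injective P.mulVecLin → restTrace ω χ P < n := by
    intro d
    induction d with
    | zero =>
      intro l hl1 hl2 P hP
      have hl : l = n - 1 := by omega
      subst hl
      exact h P hP
    | succ d ih =>
      intro l hl1 hl2 P hP
      obtain ⟨Q, hQi, hQle⟩ := step ω χ hω hχ (by omega) P hP
      exact lt_of_le_of_lt hQle (ih (l + 1) (by omega) (by omega) Q hQi)
  intro l hl1 hl2 P hP
  exact key (n - 1 - l) l hl1 (by omega) P hP
end
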